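/- (Distance formula (4.4), segment A₃F₀₃) Assume u = w, B < 0, and sin²(π/u) > cos²(π/v) (so a₀₀ = a₃₃ < 0 and a₀₀ + a₀₃ < 0). Then for the midpoint vector f₀₃ = a₀ + a₃ one has −⟨a₃, f₀₃⟩/√(⟨a₃,a₃⟩·⟨f₀₃,f₀₃⟩) = √(a₀₃/(2a₃₃) + 1/2). Moreover, if d ≥ 0 is the real number with cosh d = −a₀₃/√(a₀₀·a₃₃), then cosh(d/2) = √(a₀₃/(2a₃₃) + 1/2); that is, F₀₃ is the hyperbolic midpoint of the segment A₀A₃. -/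

import Mathlib

open Real Matrix

/-- The Coxeter–Schläfli matrix of the complete orthoscheme `W_{uvw}`. -/
noncomputable def CSmatrix (u v w : ℝ) : Matrix (Fin 4) (Fin 4) ℝ :=
  !![1, -cos (π/u), 0, 0;
     -cos (π/u), 1, -cos (π/v), 0;
     0, -cos (π/v), 1, -cos (π/w);
     0, 0, -cos (π/w), 1]

/-- The inverse of the Coxeter–Schläfli matrix; its entries are the `a_{ij}`. -/
noncomputable def CSinv (u v w : ℝ) : Matrix (Fin 4) (Fin 4) ℝ :=
  (CSmatrix u v w)⁻¹

lemma CS_det (u v : ℝ) : (CSmatrix u v u).det = (1 - cos (π/u)^2)^2 - cos (π/v)^2 := by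
  simp [CSmatrix, Matrix.det_succ_row_zero, Fin.sum_univ_succ,
    show ((1:Fin 4).succAbove 2) = 3 from rfl]
  ring

lemma CS_inv (u v : ℝ) (hB : ((1 - cos (π/u)^2)^2 - cos (π/v)^2) ≠ 0) :
    CSinv u v u = (((1 - cos (π/u)^2)^2 - cos (π/v)^2))⁻¹ •
      !![1 - cos (π/u)^2 - cos (π/v)^2, cos (π/u)*(1 - cos (π/u)^2), cos (π/u)*cos (π/v), cos (π/u)^2*cos (π/v);
         cos (π/u)*(1 - cos (π/u)^2), 1 - cos (π/u)^2, cos (π/v), cos (π/u)*cos (π/v);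
         cos (π/u)*cos (π/v), cos (π/v), 1 - cos (π/u)^2, cos (π/u)*(1 - cos (π/u)^2);
         cos (π/u)^2*cos (π/v), cos (π/u)*cos (π/v), cos (π/u)*(1 - cos (π/u)^2), 1 - cos (π/u)^2 - cos (π/v)^2] := by
  apply Matrix.inv_eq_right_inv
  ext i j
  fin_cases i <;> fin_cases j <;>
    simp [CSmatrix, Matrix.mul_apply, Fin.sum_univ_four, Matrix.smul_apply] <;>
    field_simp <;> ring

set_option maxHeartbeats 1000000 in
theorem stmt10 (u v w : ℝ) (hu : 3 ≤ u) (hv : 3 ≤ v) (hw : 3 ≤ w)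
    (hdet : (CSmatrix u v w).det ≠ 0)
    {V : Type*} [AddCommGroup V] [Module ℝ V]
    (Bf : LinearMap.BilinForm ℝ V)
    (hsymm : ∀ x y : V, Bf x y = Bf y x)
    (a : Fin 4 → V)
    (hGram : ∀ i j : Fin 4, Bf (a i) (a j) = CSinv u v w i j)
    (huw : u = w) (hBneg : (CSmatrix u v w).det < 0)
    (h1 : cos (π/v) ^ 2 < sin (π/u) ^ 2)
    (f : V) (hf : f = a 0 + a 3) :
    CSinv u v w 0 0 = CSinv u v w 3 3 ∧ CSinv u v w 3 3 < 0 ∧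
    CSinv u v w 0 0 + CSinv u v w 0 3 < 0 ∧
    -Bf (a 3) f / Real.sqrt (Bf (a 3) (a 3) * Bf f f) =
      Real.sqrt (CSinv u v w 0 3 / (2 * CSinv u v w 3 3) + 1/2) ∧
    (∀ d : ℝ, 0 ≤ d →
      Real.cosh d = -CSinv u v w 0 3 / Real.sqrt (CSinv u v w 0 0 * CSinv u v w 3 3) →
      Real.cosh (d/2) = Real.sqrt (CSinv u v w 0 3 / (2 * CSinv u v w 3 3) + 1/2)) := by
  subst huw
  have hu0 : (0:ℝ) < u := by linarith
  have hv0 : (0:ℝ) < v := by linarith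
  have hxu2 : π / u < π / 2 := by
    rw [div_lt_div_iff₀ hu0 two_pos]
    nlinarith [Real.pi_pos]
  have hx0 : 0 < Real.cos (π / u) :=
    Real.cos_pos_of_mem_Ioo ⟨by nlinarith [Real.pi_pos, div_pos Real.pi_pos hu0], hxu2⟩
  have hyv2 : π / v < π / 2 := by
    rw [div_lt_div_iff₀ hv0 two_pos]
    nlinarith [Real.pi_pos]
  have hy0 : 0 < Real.cos (π / v) :=
    Real.cos_pos_of_mem_Ioo ⟨by nlinarith [Real.pi_pos, div_pos Real.pi_pos hv0], hyv2⟩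
  have h1' : Real.cos (π/v) ^ 2 < 1 - Real.cos (π/u) ^ 2 := by
    have := Real.sin_sq (π/u)
    nlinarith
  have hy1 : Real.cos (π/v) < 1 := by nlinarith
  have hx1 : Real.cos (π/u) < 1 := by nlinarith
  have hBneg' : (1 - Real.cos (π/u)^2)^2 - Real.cos (π/v)^2 < 0 := by
    rw [← CS_det]; exact hBneg
  have hBne : (1 - Real.cos (π/u)^2)^2 - Real.cos (π/v)^2 ≠ 0 := ne_of_lt hBneg'
  have hinv := CS_inv u v hBne
  have e00 : CSinv u v u 0 0 =
      (1 - Real.cos (π/u)^2 - Real.cos (π/v)^2) / ((1 - Real.cos (π/u)^2)^2 - Real.cos (π/v)^2) := by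
    rw [hinv]; simp [Matrix.smul_apply]; ring
  have e33 : CSinv u v u 3 3 =
      (1 - Real.cos (π/u)^2 - Real.cos (π/v)^2) / ((1 - Real.cos (π/u)^2)^2 - Real.cos (π/v)^2) := by
    rw [hinv]; simp [Matrix.smul_apply]; ring
  have e03 : CSinv u v u 0 3 =
      (Real.cos (π/u)^2 * Real.cos (π/v)) / ((1 - Real.cos (π/u)^2)^2 - Real.cos (π/v)^2) := by
    rw [hinv]; simp [Matrix.smul_apply]; ring
  have e30 : CSinv u v u 3 0 =
      (Real.cos (π/u)^2 * Real.cos (π/v)) / ((1 - Real.cos (π/u)^2)^2 - Real.cos (π/v)^2) := by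
    rw [hinv]; simp [Matrix.smul_apply]; ring
  have he0033 : CSinv u v u 0 0 = CSinv u v u 3 3 := e00.trans e33.symm
  have hsym03 : CSinv u v u 3 0 = CSinv u v u 0 3 := e30.trans e03.symm
  have ht : CSinv u v u 3 3 < 0 := by
    rw [e33]; exact div_neg_of_pos_of_neg (by nlinarith) hBneg'
  have hnum2 : 0 < 1 - Real.cos (π/u)^2 - Real.cos (π/v)^2
      + Real.cos (π/u)^2 * Real.cos (π/v) := by
    nlinarith [mul_pos (by linarith : (0:ℝ) < 1 - Real.cos (π/v))
      (by nlinarith : (0:ℝ) < 1 + Real.cos (π/v) - Real.cos (π/u)^2)]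
  have hsum : CSinv u v u 0 0 + CSinv u v u 0 3 < 0 := by
    rw [e00, e03, ← add_div]
    exact div_neg_of_pos_of_neg hnum2 hBneg'
  have hs : CSinv u v u 0 3 + CSinv u v u 3 3 < 0 := by
    rw [he0033] at hsum; linarith
  have hb1 : Bf (a 3) f = CSinv u v u 0 3 + CSinv u v u 3 3 := by
    rw [hf, map_add, hGram, hGram, hsym03]
  have hb2 : Bf f f = 2 * (CSinv u v u 0 3 + CSinv u v u 3 3) := by
    rw [hf]
    simp only [map_add, LinearMap.add_apply, hGram]
    rw [hsym03, he0033]; ring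
  have hb3 : Bf (a 3) (a 3) = CSinv u v u 3 3 := hGram 3 3
  obtain ⟨c, hcdef⟩ : ∃ c, CSinv u v u 0 3 = c := ⟨_, rfl⟩
  obtain ⟨t, htdef⟩ : ∃ t, CSinv u v u 3 3 = t := ⟨_, rfl⟩
  rw [hcdef] at hb1 hb2 hs hsum ⊢
  rw [htdef] at hb1 hb2 hb3 ht hs he0033 ⊢
  have htne : t ≠ 0 := ne_of_lt ht
  have hsne : c + t ≠ 0 := ne_of_lt hs
  refine ⟨he0033, ht, hsum, ?_, ?_⟩
  · rw [hb1, hb2, hb3]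
    have harg : c / (2 * t) + 1/2 = (c+t)^2 / (t * (2 * (c+t))) := by
      field_simp
    rw [harg, Real.sqrt_div (sq_nonneg (c+t)), Real.sqrt_sq_eq_abs, abs_of_neg hs]
  · intro d _ hc
    rw [he0033] at hc
    have hroot : Real.sqrt (t * t) = -t := by
      rw [show t * t = (-t)^2 by ring, Real.sqrt_sq (by linarith : (0:ℝ) ≤ -t)]
    rw [hroot, neg_div_neg_eq] at hc
    have hdm := Real.cosh_two_mul (d/2)
    rw [show 2 * (d/2) = d by ring] at hdm
    have harg2 : c / (2*t) + 1/2 = Real.cosh (d/2) ^ 2 := by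
      have h2 : c / t = 2 * Real.cosh (d/2)^2 - 1 := by
        rw [← hc, hdm, Real.sinh_sq]; ring
      have hceq : c / (2*t) = (c/t) / 2 := by
        rw [div_div, mul_comm]
      rw [hceq, h2]; ring
    rw [harg2, Real.sqrt_sq (Real.cosh_pos _).le]
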